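/- A_q(n,2w-2,w̄) ≤ ⌊(n/w_1) · ⌊(n-1)/(w-1)⌋⌋ where w̄ = [w_1,...,w_{q-1}] with w_1 ≥ ... ≥ w_{q-1} > 0, w = Σ w_i, and w ≥ 2. -/

import Mathlib

open Finset

/-- Hamming distance between two words. -/
def hdist {n q : ℕ} (u v : Fin n → ZMod q) : ℕ :=
  (univ.filter (fun x => u x ≠ v x)).card

/-- Maximum size of a `q`-ary code of length `n`, minimum distance `d` and
constant composition `wb` (for nonzero symbols `1, …, q-1`). -/
noncomputable def ACC (q n d : ℕ) (wb : ℕ → ℕ) : ℕ :=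
  sSup {k : ℕ | ∃ C : Finset (Fin n → ZMod q),
    (∀ u ∈ C, ∀ i, 1 ≤ i → i ≤ q - 1 →
      (univ.filter (fun x => u x = (i : ZMod q))).card = wb i) ∧
    (∀ u ∈ C, ∀ v ∈ C, u ≠ v → d ≤ hdist u v) ∧
    C.card = k}

theorem stmt9 (q n : ℕ) (hq : 2 ≤ q) (wb : ℕ → ℕ)
    (hmono : ∀ i j, 1 ≤ i → i ≤ j → j ≤ q - 1 → wb j ≤ wb i)
    (hpos : ∀ i, 1 ≤ i → i ≤ q - 1 → 1 ≤ wb i)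
    (w : ℕ) (hw : w = ∑ i ∈ Finset.Icc 1 (q - 1), wb i) (hw2 : 2 ≤ w) :
    ACC q n (2 * w - 2) wb ≤ n * ((n - 1) / (w - 1)) / wb 1 := by
  classical
  haveI : NeZero q := ⟨by omega⟩
  haveI : Fact (1 < q) := ⟨by omega⟩
  have hq1 : (1 : ℕ) ≤ q - 1 := by omega
  have hwb1 : 0 < wb 1 := hpos 1 le_rfl hq1
  apply csSup_le
  · exact ⟨0, ∅, by simp, by simp, by simp⟩
  rintro k ⟨C, hcomp, hC, rfl⟩
  have hc1 : ∀ u ∈ C, (univ.filter (fun x => u x = (1:ZMod q))).card = wb 1 := by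
    intro u hu
    have := hcomp u hu 1 le_rfl hq1
    rwa [Nat.cast_one] at this
  -- each codeword has support of size w
  have hsupp : ∀ u ∈ C, (univ.filter (fun y => u y ≠ 0)).card = w := by
    intro u hu
    have heq : (univ.filter (fun y => u y ≠ 0) : Finset (Fin n)) =
        (Finset.Icc 1 (q-1)).biUnion
          (fun i => univ.filter (fun y => u y = (i : ZMod q))) := by
      ext y
      simp only [mem_filter, mem_univ, true_and, mem_biUnion, Finset.mem_Icc]
      constructor
      · intro hy
        refine ⟨(u y).val, ⟨?_, ?_⟩, ?_⟩
        · have : (u y).val ≠ 0 := fun h => hy ((ZMod.val_eq_zero _).mp h)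
          omega
        · have := ZMod.val_lt (u y); omega
        · exact (ZMod.natCast_rightInverse (u y)).symm
      · rintro ⟨i, ⟨hi1, hi2⟩, hy⟩
        rw [hy]
        intro h0
        have := (ZMod.natCast_eq_zero_iff i q).mp h0
        have := Nat.le_of_dvd (by omega) this
        omega
    rw [heq, Finset.card_biUnion, hw]
    · exact Finset.sum_congr rfl (fun i hi => by
        rw [Finset.mem_Icc] at hi; exact hcomp u hu i hi.1 hi.2)
    · intro i hi j hj hij
      rw [Finset.mem_coe, Finset.mem_Icc] at hi hj
      rw [Function.onFun, Finset.disjoint_left]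
      intro y hyi hyj
      simp only [mem_filter, mem_univ, true_and] at hyi hyj
      apply hij
      have h := congrArg ZMod.val (hyi.symm.trans hyj)
      rwa [ZMod.val_cast_of_lt (by omega), ZMod.val_cast_of_lt (by omega)] at h
  -- per-coordinate bound
  have hx : ∀ x : Fin n,
      (C.filter (fun u => u x = (1:ZMod q))).card ≤ (n-1)/(w-1) := by
    intro x
    set D := C.filter (fun u => u x = (1:ZMod q)) with hD
    set S : (Fin n → ZMod q) → Finset (Fin n) :=
      fun u => (univ.filter (fun y => u y ≠ 0)).erase x with hS
    have hone : (1 : ZMod q) ≠ 0 := one_ne_zero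
    have hScard : ∀ u ∈ D, (S u).card = w - 1 := by
      intro u hu
      rw [Finset.mem_filter] at hu
      rw [hS]
      rw [Finset.card_erase_of_mem (by simp [hu.2, hone]), hsupp u hu.1]
    have hdisj : ∀ u ∈ D, ∀ v ∈ D, u ≠ v → Disjoint (S u) (S v) := by
      intro u hu v hv huv
      rw [Finset.mem_filter] at hu hv
      rw [Finset.disjoint_left]
      intro y hyu hyv
      rw [hS] at hyu hyv
      simp only [Finset.mem_erase, mem_filter, mem_univ, true_and] at hyu hyv
      obtain ⟨hyx, hyu0⟩ := hyu
      obtain ⟨-, hyv0⟩ := hyv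
      have hd := hC u hu.1 v hv.1 huv
      set U := (univ.filter (fun z => u z ≠ 0) : Finset (Fin n)) with hU
      set V := (univ.filter (fun z => v z ≠ 0) : Finset (Fin n)) with hV
      set E := ((U ∪ V).filter (fun z => u z = v z) : Finset (Fin n)) with hE
      set A := (univ.filter (fun z => u z ≠ v z) : Finset (Fin n)) with hA
      have hAE : Disjoint A E := by
        rw [Finset.disjoint_left]
        intro z hz hz'
        simp only [hA, hE, mem_filter, mem_univ, true_and] at hz hz'
        exact hz hz'.2
      have hsub : A ∪ E ⊆ U ∪ V := by
        intro z hz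
        rcases Finset.mem_union.mp hz with hz | hz
        · simp only [hA, mem_filter, mem_univ, true_and] at hz
          simp only [hU, hV, Finset.mem_union, mem_filter, mem_univ, true_and]
          by_contra hc
          push_neg at hc
          exact hz (hc.1.trans hc.2.symm)
        · exact (Finset.filter_subset _ _) hz
      have h1 : A.card + E.card ≤ (U ∪ V).card := by
        rw [← Finset.card_union_of_disjoint hAE]
        exact Finset.card_le_card hsub
      have h2 : (U ∪ V).card + (U ∩ V).card = w + w := by
        rw [Finset.card_union_add_card_inter, hsupp u hu.1, hsupp v hv.1]
      have hxU : x ∈ U ∩ V := by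
        simp only [Finset.mem_inter, hU, hV, mem_filter, mem_univ, true_and]
        exact ⟨by rw [hu.2]; exact hone, by rw [hv.2]; exact hone⟩
      have hxE : x ∈ E := by
        simp only [hE, mem_filter]
        exact ⟨Finset.mem_union_left _ (Finset.mem_inter.mp hxU).1, by rw [hu.2, hv.2]⟩
      have hyUV : y ∈ U ∩ V := by
        simp only [Finset.mem_inter, hU, hV, mem_filter, mem_univ, true_and]
        exact ⟨hyu0, hyv0⟩
      have h3 : 3 ≤ (U ∩ V).card + E.card := by
        by_cases hEy : u y = v y
        · have hyE : y ∈ E := by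
            simp only [hE, mem_filter]
            exact ⟨Finset.mem_union_left _ (Finset.mem_inter.mp hyUV).1, hEy⟩
          have h2E : 2 ≤ E.card := by
            have : ({x, y} : Finset (Fin n)) ⊆ E := by
              intro z hz
              rcases Finset.mem_insert.mp hz with rfl | hz
              · exact hxE
              · rwa [Finset.mem_singleton.mp hz]
            calc 2 = ({x, y} : Finset (Fin n)).card := (Finset.card_pair (Ne.symm hyx)).symm
              _ ≤ E.card := Finset.card_le_card this
          have h1U : 1 ≤ (U ∩ V).card := Finset.card_pos.mpr ⟨x, hxU⟩
          omega
        · have h2U : 2 ≤ (U ∩ V).card := by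
            have : ({x, y} : Finset (Fin n)) ⊆ U ∩ V := by
              intro z hz
              rcases Finset.mem_insert.mp hz with rfl | hz
              · exact hxU
              · rwa [Finset.mem_singleton.mp hz]
            calc 2 = ({x, y} : Finset (Fin n)).card := (Finset.card_pair (Ne.symm hyx)).symm
              _ ≤ (U ∩ V).card := Finset.card_le_card this
          have h1E : 1 ≤ E.card := Finset.card_pos.mpr ⟨x, hxE⟩
          omega
      have hdA : hdist u v = A.card := rfl
      omega
    have hbi : (D.biUnion S).card = D.card * (w - 1) := by
      rw [Finset.card_biUnion hdisj]
      rw [Finset.sum_congr rfl hScard, Finset.sum_const, smul_eq_mul]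
    have hsub : D.biUnion S ⊆ univ.erase x := by
      intro y hy
      rcases Finset.mem_biUnion.mp hy with ⟨u, -, hyu⟩
      rw [hS] at hyu
      exact Finset.mem_erase.mpr ⟨(Finset.mem_erase.mp hyu).1, Finset.mem_univ y⟩
    have hle : D.card * (w - 1) ≤ n - 1 := by
      rw [← hbi]
      calc (D.biUnion S).card ≤ (univ.erase x).card := Finset.card_le_card hsub
        _ = n - 1 := by rw [Finset.card_erase_of_mem (Finset.mem_univ x), Finset.card_univ, Fintype.card_fin]
    exact (Nat.le_div_iff_mul_le (by omega)).mpr hle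
  -- double counting
  have hcount : C.card * wb 1 ≤ n * ((n-1)/(w-1)) := by
    have h1 : C.card * wb 1 = ∑ u ∈ C, (univ.filter (fun x => u x = (1:ZMod q))).card := by
      rw [Finset.sum_congr rfl hc1, Finset.sum_const, smul_eq_mul]
    have h2 : ∑ u ∈ C, (univ.filter (fun x => u x = (1:ZMod q))).card
        = ∑ x : Fin n, (C.filter (fun u => u x = (1:ZMod q))).card := by
      simp_rw [Finset.card_filter]
      exact Finset.sum_comm
    rw [h1, h2]
    calc ∑ x : Fin n, (C.filter (fun u => u x = (1:ZMod q))).card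
        ≤ ∑ _x : Fin n, (n-1)/(w-1) := Finset.sum_le_sum (fun x _ => hx x)
      _ = n * ((n-1)/(w-1)) := by rw [Finset.sum_const, smul_eq_mul, Finset.card_univ, Fintype.card_fin]
  exact (Nat.le_div_iff_mul_le hwb1).mpr hcount
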